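/- Let (D, g, h) be a winnable Czech hat game and S a set of vertices. Form the game on Option V by attaching a new vertex x universal to S with hatness h x = 2 and guessness g x = 1, keeping the guessness of all original vertices unchanged, keeping the hatness unchanged outside S, and replacing the hatness of each v ∈ S by h v + g v. The resulting Czech game is winnable. -/

import Mathlib

/-- A Czech hat game on the digraph with adjacency `D` (sage `v` sees sage `u`
iff `D v u`), guessness `g`, and hatness `h`, is winnable: there is a strategy
assigning to each sage `v` a set of `g v` guesses, depending only on the hats
she sees, such that for every coloring some sage guesses her own hat color. -/
def HatGame.Winnable {V : Type*} (D : V → V → Prop) (g h : V → ℕ) : Prop :=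
  ∃ F : ∀ v : V, (∀ u : V, Fin (h u)) → Finset (Fin (h v)),
    (∀ (v : V) (c c' : ∀ u : V, Fin (h u)),
        (∀ u : V, D v u → c u = c' u) → F v c = F v c') ∧
    (∀ (v : V) (c : ∀ u : V, Fin (h u)), (F v c).card = g v) ∧
    (∀ c : ∀ u : V, Fin (h u), ∃ v : V, c v ∈ F v c)

/-- Embedding of low colors. -/
def czLow {n m : ℕ} (hnm : n ≤ m) : Fin n ↪ Fin m :=
  ⟨fun k => ⟨k.val, lt_of_lt_of_le k.isLt hnm⟩,
   fun a b hab => by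
     simp only [Fin.mk.injEq] at hab
     exact Fin.ext hab⟩

/-- Embedding of high colors. -/
def czHigh {a b m : ℕ} (hm : a + b ≤ m) : Fin b ↪ Fin m :=
  ⟨fun j => ⟨a + j.val, by omega⟩,
   fun x y hxy => by
     simp only [Fin.mk.injEq] at hxy
     exact Fin.ext (by omega)⟩

/-- Projection to low colors. -/
def czProj {n m : ℕ} (hm : 0 < m) (k : Fin n) : Fin m :=
  if hk : k.val < m then ⟨k.val, hk⟩ else ⟨0, hm⟩

/-- Attaching a vertex of hatness 2 universal to `S` and increasing each
hatness in `S` by its guessness preserves winnability. -/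
theorem czech_attach_hatness_two {V : Type*} [Fintype V]
    (D : V → V → Prop) (hloop : ∀ v, ¬ D v v)
    (g h : V → ℕ) (hgh : ∀ v, 0 < g v ∧ g v < h v)
    (S : Set V) [DecidablePred (· ∈ S)]
    (hw : HatGame.Winnable D g h) :
    HatGame.Winnable
      (fun a b : Option V =>
        match a, b with
        | none, some v => v ∈ S
        | some v, none => v ∈ S
        | some u, some v => D u v
        | none, none => False)
      (fun a => a.elim 1 g)
      (fun a => a.elim 2 (fun v => if v ∈ S then h v + g v else h v)) := by
  classical
  obtain ⟨F, hF, hFcard, hFwin⟩ := hw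
  have hpos : ∀ v, 0 < h v := fun v => (hgh v).1.trans (hgh v).2
  have hle : ∀ v, h v ≤ (if v ∈ S then h v + g v else h v) := fun v => by split <;> omega
  have hhigh : ∀ v, v ∈ S → h v + g v ≤ (if v ∈ S then h v + g v else h v) :=
    fun v hv => by rw [if_pos hv]
  refine ⟨fun a =>
    match a with
    | none => fun c =>
        if ∀ v, v ∈ S → ((c (some v)).val < h v) then ({1} : Finset (Fin 2))
        else ({0} : Finset (Fin 2))
    | some v => fun c =>
        if hc : v ∈ S ∧ c none = (1 : Fin 2) then
          Finset.univ.map (czHigh (hhigh v hc.1))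
        else (F v (fun u => czProj (hpos u) (c (some u)))).map (czLow (hle v)),
    ?_, ?_, ?_⟩
  · -- visibility
    rintro (_ | v) c c' hcc
    · show (if (∀ v, v ∈ S → ((c (some v)).val < h v)) then ({1} : Finset (Fin 2)) else {0})
        = if (∀ v, v ∈ S → ((c' (some v)).val < h v)) then {1} else {0}
      by_cases hc1 : ∀ v, v ∈ S → ((c (some v)).val < h v)
      · rw [if_pos hc1, if_pos (fun v hv => by rw [← hcc (some v) hv]; exact hc1 v hv)]
      · rw [if_neg hc1, if_neg (fun hc2 => hc1 (fun v hv => by rw [hcc (some v) hv]; exact hc2 v hv))]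
    · have hFeq : F v (fun u => czProj (hpos u) (c (some u)))
          = F v (fun u => czProj (hpos u) (c' (some u))) :=
        hF v _ _ (fun u hu => by rw [hcc (some u) hu])
      by_cases hv : v ∈ S
      · have hnone : c none = c' none := hcc none hv
        show (if hc : v ∈ S ∧ c none = (1 : Fin 2) then
            Finset.univ.map (czHigh (hhigh v hc.1))
          else (F v (fun u => czProj (hpos u) (c (some u)))).map (czLow (hle v))) = _
        rw [hnone, hFeq]; rfl
      · show (if hc : v ∈ S ∧ c none = (1 : Fin 2) then
            Finset.univ.map (czHigh (hhigh v hc.1))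
          else (F v (fun u => czProj (hpos u) (c (some u)))).map (czLow (hle v)))
          = (if hc : v ∈ S ∧ c' none = (1 : Fin 2) then
            Finset.univ.map (czHigh (hhigh v hc.1))
          else (F v (fun u => czProj (hpos u) (c' (some u)))).map (czLow (hle v)))
        rw [dif_neg (fun hc => hv hc.1), dif_neg (fun hc => hv hc.1), hFeq]
  · -- cards
    rintro (_ | v) c
    · show (if (∀ v, v ∈ S → ((c (some v)).val < h v)) then ({1} : Finset (Fin 2)) else {0}).card = 1
      split <;> simp
    · show (if hc : v ∈ S ∧ c none = (1 : Fin 2) then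
          Finset.univ.map (czHigh (hhigh v hc.1))
        else (F v (fun u => czProj (hpos u) (c (some u)))).map (czLow (hle v))).card = g v
      by_cases hc : v ∈ S ∧ c none = (1 : Fin 2)
      · rw [dif_pos hc]; simp
      · rw [dif_neg hc, Finset.card_map, hFcard]
  · -- winning
    intro c
    by_cases hlow : ∀ v, v ∈ S → ((c (some v)).val < h v)
    · by_cases hb : c none = (1 : Fin 2)
      · refine ⟨none, ?_⟩
        show c none ∈ if (∀ v, v ∈ S → ((c (some v)).val < h v)) then ({1} : Finset (Fin 2)) else {0}
        rw [if_pos hlow, hb]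
        exact Finset.mem_singleton_self _
      · obtain ⟨v0, hv0⟩ := hFwin (fun u => czProj (hpos u) (c (some u)))
        refine ⟨some v0, ?_⟩
        show c (some v0) ∈ if hc : v0 ∈ S ∧ c none = (1 : Fin 2) then
            Finset.univ.map (czHigh (hhigh v0 hc.1))
          else (F v0 (fun u => czProj (hpos u) (c (some u)))).map (czLow (hle v0))
        rw [dif_neg (fun hc => hb hc.2)]
        have hlt : (c (some v0)).val < h v0 := by
          by_cases h0 : v0 ∈ S
          · exact hlow v0 h0
          · have h1 : (c (some v0)).val < if v0 ∈ S then h v0 + g v0 else h v0 :=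
              (c (some v0)).isLt
            rwa [if_neg h0] at h1
        refine Finset.mem_map.2 ⟨czProj (hpos v0) (c (some v0)), hv0, ?_⟩
        simp only [czLow, czProj, dif_pos hlt, Function.Embedding.coeFn_mk]
        exact Fin.ext rfl
    · push_neg at hlow
      obtain ⟨v1, hv1S, hv1⟩ := hlow
      by_cases hb : c none = (1 : Fin 2)
      · refine ⟨some v1, ?_⟩
        show c (some v1) ∈ if hc : v1 ∈ S ∧ c none = (1 : Fin 2) then
            Finset.univ.map (czHigh (hhigh v1 hc.1))
          else (F v1 (fun u => czProj (hpos u) (c (some u)))).map (czLow (hle v1))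
        rw [dif_pos ⟨hv1S, hb⟩]
        have h1 : (c (some v1)).val < h v1 + g v1 := by
          have h2 : (c (some v1)).val < if v1 ∈ S then h v1 + g v1 else h v1 :=
            (c (some v1)).isLt
          rwa [if_pos hv1S] at h2
        refine Finset.mem_map.2 ⟨⟨(c (some v1)).val - h v1, by omega⟩, Finset.mem_univ _, ?_⟩
        simp only [czHigh, Function.Embedding.coeFn_mk]
        exact Fin.ext (by show h v1 + ((c (some v1)).val - h v1) = _; omega)
      · refine ⟨none, ?_⟩
        show c none ∈ if (∀ v, v ∈ S → ((c (some v)).val < h v)) then ({1} : Finset (Fin 2)) else {0}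
        have hcond : ¬ ∀ v, v ∈ S → ((c (some v)).val < h v) :=
          fun hc => absurd (hc v1 hv1S) (by omega)
        rw [if_neg hcond]
        have hval : (c none).val = 0 := by
          have h2 : (c none).val < 2 := (c none).isLt
          have h1 : (c none).val ≠ 1 := fun hh => hb (Fin.ext hh)
          omega
        exact Finset.mem_singleton.2 (Fin.ext hval)
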